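/- arXiv:0710.3456 — 7 statements merged into one kernel-verified Lean document; each statement's English description precedes it below -/
import Mathlib

section
/- For all x ∈ ℝ, the function Ψ(x) = 1/(1+x²) − Φ(−|x|) is positive, where Φ is the standard normal cumulative distribution function. -/
open Real MeasureTheory

noncomputable def stdNormalCDF (x : ℝ) : ℝ :=
  ∫ t in Set.Iic x, Real.exp (-t ^ 2 / 2) / Real.sqrt (2 * Real.pi)

open Set Filter Topology

private lemma gauss_eq : (fun t : ℝ => Real.exp (-t ^ 2 / 2))
    = fun t => Real.exp (-(1/2) * t ^ 2) := by
  funext t; congr 1; ring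

private lemma gauss_integrable : Integrable (fun t : ℝ => Real.exp (-t ^ 2 / 2)) := by
  rw [gauss_eq]; exact integrable_exp_neg_mul_sq (by norm_num)

private lemma gauss_total : ∫ t : ℝ, Real.exp (-t ^ 2 / 2) = Real.sqrt (2 * Real.pi) := by
  rw [gauss_eq, integral_gaussian]
  congr 1; rw [div_div_eq_mul_div]; ring_nf

private lemma gauss_half : ∫ t in Iic (0:ℝ), Real.exp (-t ^ 2 / 2)
    = Real.sqrt (2 * Real.pi) / 2 := by
  have hsym : ∫ t in Iic (0:ℝ), Real.exp (-t ^ 2 / 2)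
      = ∫ t in Ioi (0:ℝ), Real.exp (-t ^ 2 / 2) := by
    rw [show (Ioi (0:ℝ)) = Ioi (-(0:ℝ)) by norm_num,
      ← integral_comp_neg_Iic (0:ℝ) (fun t => Real.exp (-t ^ 2 / 2))]
    apply setIntegral_congr_fun measurableSet_Iic
    intro y _; simp [neg_sq]
  have hadd := intervalIntegral.integral_Iic_add_Ioi (b := (0:ℝ))
    (gauss_integrable.integrableOn) (gauss_integrable.integrableOn)
  rw [gauss_total] at hadd
  linarith [hsym, hadd]

private lemma integrableOn_exp_mul_Iic' {a : ℝ} (c : ℝ) (ha : (0:ℝ) < a) :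
    IntegrableOn (fun t : ℝ => Real.exp (a * t)) (Iic c) := by
  have m : MeasurableEmbedding (Neg.neg : ℝ → ℝ) := (Homeomorph.neg ℝ).measurableEmbedding
  rw [← Measure.map_neg_eq_self (volume : Measure ℝ), m.integrableOn_map_iff]
  have h : IntegrableOn (fun x : ℝ => Real.exp (-a * x)) (Ici (-c)) :=
    Iff.mpr integrableOn_Ici_iff_integrableOn_Ioi (exp_neg_integrableOn_Ioi _ ha)
  have hs : (Neg.neg : ℝ → ℝ) ⁻¹' (Iic c) = Ici (-c) := by
    ext y; simp [neg_le]
  rw [hs]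
  exact h.congr_fun (fun y _ => by simp [Function.comp, neg_mul, mul_neg]) measurableSet_Ici

private lemma integrableOn_exp_affine {a : ℝ} (c : ℝ) (ha : (0:ℝ) < a) :
    IntegrableOn (fun t : ℝ => Real.exp (a ^ 2 / 2 + a * t)) (Iic c) := by
  have h2 : IntegrableOn (fun t : ℝ => Real.exp (a ^ 2 / 2) * Real.exp (a * t)) (Iic c) :=
    (integrableOn_exp_mul_Iic' (a := a) c ha).const_mul (Real.exp (a ^ 2 / 2))
  exact h2.congr_fun (fun y _ => by beta_reduce; rw [← Real.exp_add]) measurableSet_Iic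

private lemma integral_exp_affine {a : ℝ} (ha : (0:ℝ) < a) :
    ∫ t in Iic (-a), Real.exp (a ^ 2 / 2 + a * t) = Real.exp (-a ^ 2 / 2) / a := by
  have hderiv : ∀ t ∈ Iic (-a),
      HasDerivAt (fun t => Real.exp (a ^ 2 / 2 + a * t) / a)
        (Real.exp (a ^ 2 / 2 + a * t)) t := by
    intro t _
    have h1 : HasDerivAt (fun t : ℝ => a ^ 2 / 2 + a * t) a t := by
      simpa using ((hasDerivAt_id t).const_mul a).const_add (a ^ 2 / 2)
    have h2 := h1.exp.div_const a
    rwa [mul_div_cancel_right₀ _ ha.ne'] at h2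
  have htend : Tendsto (fun t => Real.exp (a ^ 2 / 2 + a * t) / a) atBot (𝓝 0) := by
    have h1 : Tendsto (fun t : ℝ => a ^ 2 / 2 + a * t) atBot atBot := by
      apply tendsto_atBot_add_const_left
      exact (tendsto_id (α := ℝ)).const_mul_atBot ha
    have := (Real.tendsto_exp_atBot.comp h1).div_const a
    simpa using this
  have := integral_Iic_of_hasDerivAt_of_tendsto' hderiv
    (integrableOn_exp_affine (-a) ha) htend
  rw [this, sub_zero]
  congr 1
  ring

theorem Psi_pos (x : ℝ) :
    0 < 1 / (1 + x ^ 2) - stdNormalCDF (-|x|) := by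
  set a := |x| with hadef
  have ha : 0 ≤ a := abs_nonneg x
  have hax : a ^ 2 = x ^ 2 := sq_abs x
  set s := Real.sqrt (2 * Real.pi) with hsdef
  have hs : 0 < s := Real.sqrt_pos.mpr (by positivity)
  have hs2 : s ^ 2 = 2 * Real.pi := Real.sq_sqrt (by positivity)
  have hcdf : stdNormalCDF (-a) = (∫ t in Iic (-a), Real.exp (-t ^ 2 / 2)) / s := by
    rw [stdNormalCDF, integral_div]
  set I := ∫ t in Iic (-a), Real.exp (-t ^ 2 / 2) with hIdef
  rw [← hax, hcdf]
  rcases lt_or_ge a 1 with hlt | hge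
  · -- small case : I/s ≤ 1/2 < 1/(1+a²)
    have hIle : I ≤ s / 2 := by
      rw [hsdef, ← gauss_half]
      apply setIntegral_mono_set gauss_integrable.integrableOn
      · filter_upwards with t using (Real.exp_pos _).le
      · exact HasSubset.Subset.eventuallyLE (Iic_subset_Iic.mpr (by linarith))
    have h1 : I / s ≤ 1 / 2 := by
      rw [div_le_div_iff₀ hs (by norm_num)]
      linarith
    have h2 : (1:ℝ) / 2 < 1 / (1 + a ^ 2) := by
      rw [div_lt_div_iff₀ (by norm_num) (by positivity)]
      nlinarith
    linarith
  · -- large case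
    have hI2 : I ≤ Real.exp (-a ^ 2 / 2) / a := by
      rw [← integral_exp_affine (by linarith : (0:ℝ) < a)]
      apply setIntegral_mono_on gauss_integrable.integrableOn
        (integrableOn_exp_affine (-a) (by linarith)) measurableSet_Iic
      intro t _
      apply Real.exp_le_exp.mpr
      nlinarith [sq_nonneg (a + t)]
    have hkey : Real.exp (-a ^ 2 / 2) / a / s < 1 / (1 + a ^ 2) := by
      rw [div_div, div_lt_div_iff₀ (by positivity) (by positivity), one_mul]
      -- goal : exp(-a²/2) * (1+a²) < a * s
      have h1 : (1 + a ^ 2) / 2 ≤ Real.exp ((a ^ 2 - 1) / 2) := by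
        have := Real.add_one_le_exp ((a ^ 2 - 1) / 2)
        linarith
      have hmul : Real.exp ((a ^ 2 - 1) / 2) * Real.exp (-a ^ 2 / 2)
          = Real.exp (-(1/2)) := by
        rw [← Real.exp_add]; congr 1; ring
      have h2 : Real.exp (-a ^ 2 / 2) * (1 + a ^ 2) ≤ 2 * Real.exp (-(1/2)) := by
        nlinarith [Real.exp_pos (-a ^ 2 / 2)]
      have hexp1 : Real.exp (-(1/2)) * Real.exp (-(1/2)) = Real.exp (-1) := by
        rw [← Real.exp_add]; norm_num
      have hem : Real.exp (-(1:ℝ)) < 0.37 := by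
        rw [Real.exp_neg]
        rw [inv_lt_comm₀ (Real.exp_pos 1) (by norm_num)]
        calc (0.37:ℝ)⁻¹ < 2.7182818283 := by norm_num
          _ < Real.exp 1 := Real.exp_one_gt_d9
      have h3 : 2 * Real.exp (-(1/2:ℝ)) < s := by
        nlinarith [Real.exp_pos (-(1/2:ℝ)), Real.pi_gt_d6, hs]
      have h4 : s ≤ a * s := by nlinarith
      linarith
    have hdiv : I / s ≤ Real.exp (-a ^ 2 / 2) / a / s := by gcongr
    linarith
end

section
/- The equation x·e^{x²/2}/(1+x²)² = 1/√(8π) has a unique solution x_Φ in (0, ∞), and 0.213 < x_Φ < 0.214. -/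
open Real

private lemma hasDeriv_h (s : ℝ) (x : ℝ) :
    HasDerivAt (fun y : ℝ => y * Real.exp (y ^ 2 / 2) * s - (1 + y ^ 2) ^ 2)
      ((1 + x ^ 2) * Real.exp (x ^ 2 / 2) * s - 4 * x * (1 + x ^ 2)) x := by
  have h1 : HasDerivAt (fun y : ℝ => y ^ 2 / 2) x x := by
    simpa using (hasDerivAt_pow 2 x).div_const 2
  have h2 := ((hasDerivAt_id x).mul h1.exp).mul_const s
  have hb : HasDerivAt (fun y : ℝ => 1 + y ^ 2) (2 * x) x := by
    simpa using (hasDerivAt_pow 2 x).const_add 1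
  have h3 := hb.pow 2
  refine (h2.sub h3).congr_deriv ?_
  simp only [id_eq, Nat.cast_ofNat, pow_one]
  ring

theorem u_eq_root_unique :
    ∃ xΦ : ℝ, 0 < xΦ ∧
      xΦ * Real.exp (xΦ ^ 2 / 2) / (1 + xΦ ^ 2) ^ 2 = 1 / Real.sqrt (8 * Real.pi) ∧
      0.213 < xΦ ∧ xΦ < 0.214 ∧
      ∀ y : ℝ, 0 < y →
        y * Real.exp (y ^ 2 / 2) / (1 + y ^ 2) ^ 2 = 1 / Real.sqrt (8 * Real.pi) → y = xΦ := by
  set s : ℝ := Real.sqrt (8 * Real.pi) with hs_def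
  have hπ : (0:ℝ) < Real.pi := Real.pi_pos
  have hs_sq : s ^ 2 = 8 * Real.pi := Real.sq_sqrt (by positivity)
  have hs_pos : 0 < s := Real.sqrt_pos.2 (by positivity)
  have hπu : Real.pi < 3.141593 := Real.pi_lt_d6
  have hπl : 3.141592 < Real.pi := Real.pi_gt_d6
  have hs_ub : s < 5.01326 := by nlinarith
  have hs_lb : 5.013256 < s := by nlinarith
  set h : ℝ → ℝ := fun y : ℝ => y * Real.exp (y ^ 2 / 2) * s - (1 + y ^ 2) ^ 2 with hh
  -- strict monotonicity
  have hmono : StrictMono h := by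
    apply strictMono_of_deriv_pos
    intro x
    rw [(hasDeriv_h s x).deriv]
    have hx2 : (0:ℝ) < 1 + x ^ 2 := by positivity
    have hexp : 1 + x ^ 2 / 2 ≤ Real.exp (x ^ 2 / 2) := by
      have := Real.add_one_le_exp (x ^ 2 / 2); linarith
    have hexppos : 0 < Real.exp (x ^ 2 / 2) := Real.exp_pos _
    have key : 4 * x < Real.exp (x ^ 2 / 2) * s := by
      rcases le_or_gt x 0 with hx | hx
      · nlinarith
      · have h5 : 5 * (1 + x ^ 2 / 2) ≤ s * Real.exp (x ^ 2 / 2) := by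
          have := mul_le_mul (le_of_lt (by linarith : (5:ℝ) < s)) hexp
            (by positivity) (le_of_lt hs_pos)
          linarith
        nlinarith [sq_nonneg (5 * x - 4)]
    nlinarith
  have hcont : Continuous h := by
    apply Continuous.sub
    · exact (continuous_id.mul (Real.continuous_exp.comp (by continuity))).mul continuous_const
    · continuity
  -- numeric endpoint bounds
  have ha : h 0.213 < 0 := by
    have ht : Real.exp (0.213 ^ 2 / 2) < 1.0232115 := by
      have h1 : (-(0.213 ^ 2 / 2) : ℝ) + 1 < Real.exp (-(0.213 ^ 2 / 2)) :=
        Real.add_one_lt_exp (by norm_num)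
      rw [Real.exp_neg] at h1
      have h2 : (0:ℝ) < Real.exp (0.213 ^ 2 / 2) := Real.exp_pos _
      have h3 : Real.exp (0.213 ^ 2 / 2) * (-(0.213 ^ 2 / 2) + 1) < 1 := by
        calc Real.exp (0.213 ^ 2 / 2) * (-(0.213 ^ 2 / 2) + 1)
            < Real.exp (0.213 ^ 2 / 2) * (Real.exp (0.213 ^ 2 / 2))⁻¹ :=
              mul_lt_mul_of_pos_left h1 h2
          _ = 1 := mul_inv_cancel₀ (ne_of_gt h2)
      nlinarith
    have hE : 0 < Real.exp (0.213 ^ 2 / 2) := Real.exp_pos _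
    simp only [hh]
    nlinarith
  have hb : 0 < h 0.214 := by
    have ht : (1.022898 : ℝ) ≤ Real.exp (0.214 ^ 2 / 2) := by
      have := Real.add_one_le_exp ((0.214:ℝ) ^ 2 / 2); norm_num at this ⊢; linarith
    simp only [hh]
    nlinarith
  -- existence of root by IVT
  have hsub : Set.Ioo (h 0.213) (h 0.214) ⊆ h '' Set.Ioo 0.213 0.214 :=
    intermediate_value_Ioo (by norm_num) hcont.continuousOn
  obtain ⟨x, hxmem, hx0⟩ := hsub ⟨ha, hb⟩
  have hx1 : (0.213:ℝ) < x := hxmem.1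
  have hx2 : x < 0.214 := hxmem.2
  have hxpos : 0 < x := by linarith
  have hx2pos : (0:ℝ) < (1 + x ^ 2) ^ 2 := by positivity
  have heq : x * Real.exp (x ^ 2 / 2) * s = (1 + x ^ 2) ^ 2 := by
    have : h x = 0 := hx0
    simp only [hh] at this; linarith
  refine ⟨x, hxpos, ?_, hx1, hx2, ?_⟩
  · rw [div_eq_div_iff (ne_of_gt hx2pos) (ne_of_gt hs_pos)]
    linarith [heq]
  · intro y hy hyeq
    have hy2pos : (0:ℝ) < (1 + y ^ 2) ^ 2 := by positivity
    rw [div_eq_div_iff (ne_of_gt hy2pos) (ne_of_gt hs_pos)] at hyeq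
    have hy0 : h y = 0 := by simp only [hh]; linarith
    exact hmono.injective (hy0.trans hx0.symm)
end

section
/- Let x_Φ be the unique positive root of x·e^{x²/2}/(1+x²)² = 1/√(8π). Then the even function Ψ(x) = 1/(1+x²) − Φ(−|x|) attains its maximum over ℝ exactly at the two points x_Φ and −x_Φ. -/
open Real MeasureTheory

noncomputable def Psi (x : ℝ) : ℝ := 1 / (1 + x ^ 2) - stdNormalCDF (-|x|)

namespace PsiAux

noncomputable def g (t : ℝ) : ℝ := Real.exp (-t ^ 2 / 2) / Real.sqrt (2 * Real.pi)

noncomputable def h (x : ℝ) : ℝ := x * Real.exp (x ^ 2 / 2) / (1 + x ^ 2) ^ 2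

noncomputable def c : ℝ := 1 / Real.sqrt (8 * Real.pi)

lemma g_cont : Continuous g := by unfold g; fun_prop

lemma g_integrable : Integrable g := by
  have : g = fun t => Real.exp (-(1/2) * t ^ 2) * (Real.sqrt (2 * Real.pi))⁻¹ := by
    funext t
    rw [g, div_eq_mul_inv]
    congr 2
    ring
  rw [this]
  exact (integrable_exp_neg_mul_sq (by norm_num)).mul_const _

lemma cdf_eq (x : ℝ) : stdNormalCDF x = stdNormalCDF 0 + ∫ t in (0:ℝ)..x, g t := by
  have h := intervalIntegral.integral_Iic_sub_Iic
    (g_integrable.integrableOn (s := Set.Iic 0)) (g_integrable.integrableOn (s := Set.Iic x))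
  unfold stdNormalCDF g
  unfold g at h
  linarith

lemma cdf_hasDeriv (x : ℝ) : HasDerivAt stdNormalCDF (g x) x := by
  have h1 : HasDerivAt (fun u => ∫ t in (0:ℝ)..u, g t) (g x) x :=
    (g_cont.integral_hasStrictDerivAt 0 x).hasDerivAt
  have h2 : HasDerivAt (fun u => stdNormalCDF 0 + ∫ t in (0:ℝ)..u, g t) (g x) x :=
    h1.const_add _
  have heq : stdNormalCDF = fun u => stdNormalCDF 0 + ∫ t in (0:ℝ)..u, g t :=
    funext cdf_eq
  rw [heq]
  exact h2

noncomputable def f (x : ℝ) : ℝ := 1 / (1 + x ^ 2) - stdNormalCDF (-x)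

lemma g_even (x : ℝ) : g (-x) = g x := by simp [g]

lemma f_hasDeriv (x : ℝ) :
    HasDerivAt f (g x - 2 * x / (1 + x ^ 2) ^ 2) x := by
  have hne : (1 + x ^ 2) ≠ 0 := by positivity
  have hq : HasDerivAt (fun y : ℝ => 1 + y ^ 2) (2 * x) x := by
    simpa using (hasDerivAt_pow 2 x).const_add 1
  have h1 : HasDerivAt (fun y : ℝ => 1 / (1 + y ^ 2)) (-(2 * x) / (1 + x ^ 2) ^ 2) x := by
    rw [show (fun y : ℝ => 1 / (1 + y ^ 2)) = (fun y => 1 + y ^ 2)⁻¹ by ext y; simp]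
    exact hq.inv hne
  have h2 : HasDerivAt (fun y : ℝ => stdNormalCDF (-y)) (-(g x)) x := by
    have := (cdf_hasDeriv (-x)).comp x (hasDerivAt_neg x)
    simpa [Function.comp_def, g_even] using this
  have h3 := h1.sub h2
  rw [show g x - 2 * x / (1 + x ^ 2) ^ 2 = -(2 * x) / (1 + x ^ 2) ^ 2 - -g x by ring]
  exact h3

lemma f_cont : Continuous f := by
  have hd : Differentiable ℝ f := fun x => (f_hasDeriv x).differentiableAt
  exact hd.continuous

lemma h_cont : Continuous h := by
  unfold h
  exact (continuous_id.mul (by fun_prop)).div (by fun_prop) (fun x => by positivity)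

lemma sqrt8pi : Real.sqrt (8 * Real.pi) = 2 * Real.sqrt (2 * Real.pi) := by
  rw [show (8:ℝ) * Real.pi = 2 ^ 2 * (2 * Real.pi) by ring,
    Real.sqrt_mul (by positivity), Real.sqrt_sq (by norm_num)]

lemma c_pos : 0 < c := by
  unfold c
  have : 0 < Real.sqrt (8 * Real.pi) := Real.sqrt_pos.2 (by positivity)
  positivity

lemma deriv_eq (x : ℝ) :
    g x - 2 * x / (1 + x ^ 2) ^ 2 = 2 * Real.exp (-x ^ 2 / 2) * (c - h x) := by
  have hs2 : (0:ℝ) < Real.sqrt (2 * Real.pi) := Real.sqrt_pos.2 (by positivity)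
  have he : (0:ℝ) < Real.exp (x ^ 2 / 2) := Real.exp_pos _
  have hd : ((1:ℝ) + x ^ 2) ^ 2 ≠ 0 := by positivity
  rw [g, h, c, sqrt8pi, show (-x ^ 2 / 2) = -(x ^ 2 / 2) by ring, Real.exp_neg]
  field_simp

lemma deriv_pos {x : ℝ} (hx : h x < c) : 0 < g x - 2 * x / (1 + x ^ 2) ^ 2 := by
  rw [deriv_eq]
  have := Real.exp_pos (-x ^ 2 / 2)
  nlinarith

lemma deriv_neg {x : ℝ} (hx : c < h x) : g x - 2 * x / (1 + x ^ 2) ^ 2 < 0 := by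
  rw [deriv_eq]
  have := Real.exp_pos (-x ^ 2 / 2)
  nlinarith

lemma h_zero : h 0 = 0 := by simp [h]

lemma h_lower {x : ℝ} (hx : 1 ≤ x) : x ^ 3 / 864 ≤ h x := by
  have he : Real.exp (x ^ 2 / 6) ^ 3 = Real.exp (x ^ 2 / 2) := by
    rw [← Real.exp_nat_mul]
    congr 1
    push_cast
    ring
  have h1 : (1 + x ^ 2 / 6) ≤ Real.exp (x ^ 2 / 6) := by
    have := Real.add_one_le_exp (x ^ 2 / 6)
    linarith
  have h1' : (0:ℝ) ≤ 1 + x ^ 2 / 6 := by positivity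
  have h2 : (1 + x ^ 2 / 6) ^ 3 ≤ Real.exp (x ^ 2 / 2) := by
    rw [← he]
    exact pow_le_pow_left₀ h1' h1 3
  have hd : (0:ℝ) < (1 + x ^ 2) ^ 2 := by positivity
  rw [h, le_div_iff₀ hd]
  nlinarith [sq_nonneg x, sq_nonneg (x - 1), sq_nonneg (x ^ 2 - 1), sq_nonneg (x ^ 3 - x)]

end PsiAux

open PsiAux in
theorem Psi_max_points (xΦ : ℝ) (hpos : 0 < xΦ)
    (hroot : xΦ * Real.exp (xΦ ^ 2 / 2) / (1 + xΦ ^ 2) ^ 2 = 1 / Real.sqrt (8 * Real.pi))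
    (huniq : ∀ y : ℝ, 0 < y →
      y * Real.exp (y ^ 2 / 2) / (1 + y ^ 2) ^ 2 = 1 / Real.sqrt (8 * Real.pi) → y = xΦ) :
    ∀ x : ℝ, Psi x ≤ Psi xΦ ∧ (Psi x = Psi xΦ ↔ x = xΦ ∨ x = -xΦ) := by
  have huniq' : ∀ y : ℝ, 0 < y → h y = c → y = xΦ := fun y hy hc => huniq y hy hc
  -- h < c on (0, xΦ)
  have hA : ∀ y : ℝ, 0 < y → y < xΦ → h y < c := by
    intro y hy0 hyx
    by_contra hcon
    push_neg at hcon
    have hsub : c ∈ Set.Icc (h 0) (h y) := ⟨by rw [h_zero]; exact c_pos.le, hcon⟩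
    obtain ⟨z, hz, hzc⟩ := intermediate_value_Icc hy0.le (h_cont.continuousOn) hsub
    have hz0 : 0 < z := by
      rcases hz.1.lt_or_eq with hlt | heq
      · exact hlt
      · exfalso; rw [← heq, h_zero] at hzc; exact absurd hzc.symm (ne_of_gt c_pos)
    have := huniq' z hz0 hzc
    linarith [hz.2]
  -- h > c on (xΦ, ∞)
  have hB : ∀ y : ℝ, xΦ < y → c < h y := by
    intro y hyx
    by_contra hcon
    push_neg at hcon
    set z : ℝ := max y (max 1 (864 * c + 1)) with hzdef
    have hz1 : (1:ℝ) ≤ z := le_trans (le_max_left _ _) (le_max_right _ _)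
    have hzy : y ≤ z := le_max_left _ _
    have hzc : 864 * c + 1 ≤ z := le_trans (le_max_right _ _) (le_max_right _ _)
    have hhz : c < h z := by
      have h1 := h_lower hz1
      have h2 : z ≤ z ^ 3 := le_self_pow₀ (by linarith) (by norm_num)
      have : c < z / 864 := by nlinarith [c_pos]
      calc c < z / 864 := this
        _ ≤ z ^ 3 / 864 := by linarith
        _ ≤ h z := h1
    have hsub : c ∈ Set.Icc (h y) (h z) := ⟨hcon, hhz.le⟩
    obtain ⟨w, hw, hwc⟩ := intermediate_value_Icc hzy (h_cont.continuousOn) hsub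
    have hw0 : 0 < w := lt_trans hpos (lt_of_lt_of_le hyx hw.1)
    have := huniq' w hw0 hwc
    linarith [hw.1]
  have hmono : StrictMonoOn f (Set.Icc 0 xΦ) := by
    apply strictMonoOn_of_deriv_pos (convex_Icc _ _) (f_cont.continuousOn)
    intro y hy
    rw [interior_Icc] at hy
    rw [(f_hasDeriv y).deriv]
    exact deriv_pos (hA y hy.1 hy.2)
  have hanti : StrictAntiOn f (Set.Ici xΦ) := by
    apply strictAntiOn_of_deriv_neg (convex_Ici _) (f_cont.continuousOn)
    intro y hy
    rw [interior_Ici] at hy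
    rw [(f_hasDeriv y).deriv]
    exact deriv_neg (hB y hy)
  have key : ∀ y : ℝ, 0 ≤ y → y ≠ xΦ → f y < f xΦ := by
    intro y hy hne
    rcases lt_or_gt_of_ne hne with hlt | hgt
    · exact hmono ⟨hy, hlt.le⟩ ⟨hpos.le, le_refl _⟩ hlt
    · exact hanti (le_refl xΦ) hgt.le hgt
  have hPsi : ∀ y : ℝ, Psi y = f |y| := by
    intro y; simp [Psi, f, sq_abs]
  have habs : Psi xΦ = f xΦ := by rw [hPsi, abs_of_pos hpos]
  intro x
  constructor
  · rw [hPsi, habs]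
    rcases eq_or_ne |x| xΦ with he | hne
    · rw [he]
    · exact (key _ (abs_nonneg x) hne).le
  · constructor
    · intro heq
      by_contra hcon
      push_neg at hcon
      have hne : |x| ≠ xΦ := by
        intro habs2
        rcases (abs_eq hpos.le).1 habs2 with h | h
        · exact hcon.1 h
        · exact hcon.2 h
      have := key _ (abs_nonneg x) hne
      rw [hPsi, habs] at heq
      linarith
    · rintro (rfl | rfl)
      · rfl
      · rw [hPsi, abs_neg, abs_of_pos hpos, habs]
end

section
/- The maximum value C_Φ = sup_{x∈ℝ} (1/(1+x²) − Φ(−|x|)) satisfies 0.5409 < C_Φ < 0.5410. -/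
open Real MeasureTheory

namespace CPhiAux

open Set

lemma exp_integrable : Integrable (fun t : ℝ => Real.exp (-t ^ 2 / 2)) := by
  have h := integrable_exp_neg_mul_sq (by norm_num : (0:ℝ) < 1/2)
  convert h using 2 with t
  ring_nf

lemma total_int : ∫ t : ℝ, Real.exp (-t ^ 2 / 2) = Real.sqrt (2 * π) := by
  have h := integral_gaussian (1/2 : ℝ)
  have : ∀ t : ℝ, -t ^ 2 / 2 = -(1/2) * t ^ 2 := fun t => by ring
  simp_rw [this]
  rw [h]
  rw [show (2:ℝ)*π = π*2 by ring]; rw [Real.sqrt_mul pi_pos.le]; norm_num [Real.sqrt_div_self']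

lemma Ioi_int : ∫ t in Ioi (0:ℝ), Real.exp (-t ^ 2 / 2) = Real.sqrt (2 * π) / 2 := by
  have h := integral_gaussian_Ioi (1/2 : ℝ)
  have : ∀ t : ℝ, -t ^ 2 / 2 = -(1/2) * t ^ 2 := fun t => by ring
  simp_rw [this]
  rw [h]
  rw [show (2:ℝ)*π = π*2 by ring]; rw [Real.sqrt_mul pi_pos.le]; norm_num [Real.sqrt_div_self']

lemma Iic_int : ∫ t in Iic (0:ℝ), Real.exp (-t ^ 2 / 2) = Real.sqrt (2 * π) / 2 := by
  have h := intervalIntegral.integral_Iic_add_Ioi (b := (0:ℝ))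
    exp_integrable.integrableOn exp_integrable.integrableOn
  rw [total_int, Ioi_int] at h
  linarith

lemma cdf_eq (a : ℝ) :
    stdNormalCDF (-a)
      = 1/2 - (∫ t in (0:ℝ)..a, Real.exp (-t ^ 2 / 2)) / Real.sqrt (2 * π) := by
  have h2π : (0:ℝ) < Real.sqrt (2 * π) := Real.sqrt_pos.2 (by positivity)
  have hint : ∫ t in Set.Iic (-a), Real.exp (-t ^ 2 / 2)
      = Real.sqrt (2 * π) / 2 - ∫ t in (0:ℝ)..a, Real.exp (-t ^ 2 / 2) := by
    have hsub := intervalIntegral.integral_Iic_sub_Iic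
      (f := fun t : ℝ => Real.exp (-t ^ 2 / 2)) (μ := volume)
      (a := -a) (b := 0) exp_integrable.integrableOn exp_integrable.integrableOn
    have hneg : (∫ t in (-a)..(0:ℝ), Real.exp (-t ^ 2 / 2))
        = ∫ t in (0:ℝ)..a, Real.exp (-t ^ 2 / 2) := by
      have h := intervalIntegral.integral_comp_neg (a := (0:ℝ)) (b := a)
        (fun t : ℝ => Real.exp (-t ^ 2 / 2))
      simp only [neg_sq, neg_zero] at h
      exact h.symm
    rw [Iic_int, hneg] at hsub
    linarith
  unfold stdNormalCDF
  rw [integral_div, hint]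
  field_simp

lemma poly_int (a : ℝ) :
    (∫ t in (0:ℝ)..a, (1 - t ^ 2 / 2)) = a - a ^ 3 / 6 := by
  rw [intervalIntegral.integral_sub intervalIntegrable_const
      ((intervalIntegral.intervalIntegrable_pow 2).div_const 2)]
  rw [intervalIntegral.integral_div, integral_pow]
  simp
  ring

lemma poly_int2 (a : ℝ) :
    (∫ t in (0:ℝ)..a, (1 - t ^ 2 / 2 + t ^ 4 / 8 + t ^ 6 / 36))
      = a - a ^ 3 / 6 + a ^ 5 / 40 + a ^ 7 / 252 := by
  have h2 : IntervalIntegrable (fun t : ℝ => t ^ 2 / 2) volume 0 a :=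
    (intervalIntegral.intervalIntegrable_pow 2).div_const 2
  have h4 : IntervalIntegrable (fun t : ℝ => t ^ 4 / 8) volume 0 a :=
    (intervalIntegral.intervalIntegrable_pow 4).div_const 8
  have h6 : IntervalIntegrable (fun t : ℝ => t ^ 6 / 36) volume 0 a :=
    (intervalIntegral.intervalIntegrable_pow 6).div_const 36
  rw [intervalIntegral.integral_add ((intervalIntegrable_const.sub h2).add h4) h6,
      intervalIntegral.integral_add (intervalIntegrable_const.sub h2) h4,
      intervalIntegral.integral_sub intervalIntegrable_const h2]
  rw [intervalIntegral.integral_div, intervalIntegral.integral_div,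
      intervalIntegral.integral_div, integral_pow, integral_pow, integral_pow]
  simp
  ring

lemma exp_cont : Continuous (fun t : ℝ => Real.exp (-t ^ 2 / 2)) := by fun_prop

lemma int_lb {a : ℝ} (h0 : 0 ≤ a) :
    a - a ^ 3 / 6 ≤ ∫ t in (0:ℝ)..a, Real.exp (-t ^ 2 / 2) := by
  rw [← poly_int a]
  apply intervalIntegral.integral_mono_on h0
    ((by fun_prop : Continuous (fun t : ℝ => 1 - t ^ 2 / 2)).intervalIntegrable 0 a)
    (exp_cont.intervalIntegrable 0 a)
  intro t _
  nlinarith [Real.add_one_le_exp (-t ^ 2 / 2)]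

lemma exp_ub {t : ℝ} (h : t ^ 2 ≤ 1) :
    Real.exp (-t ^ 2 / 2) ≤ 1 - t ^ 2 / 2 + t ^ 4 / 8 + t ^ 6 / 36 := by
  have ht : |(-t ^ 2 / 2 : ℝ)| ≤ 1 := by
    rw [abs_le]; constructor <;> nlinarith [sq_nonneg t]
  have hb := Real.exp_bound ht (n := 3) (by norm_num)
  rw [abs_le] at hb
  have hs : (∑ m ∈ Finset.range 3, (-t ^ 2 / 2) ^ m / m.factorial)
      = 1 - t ^ 2 / 2 + t ^ 4 / 8 := by
    simp [Finset.sum_range_succ, Nat.factorial]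
    ring
  rw [hs] at hb
  have habs : |(-t ^ 2 / 2 : ℝ)| ^ 3 ≤ (t ^ 2 / 2) ^ 3 := by
    rw [abs_div, abs_neg, abs_two, abs_of_nonneg (sq_nonneg t)]
  have := hb.2
  have h36 : |(-t ^ 2 / 2 : ℝ)| ^ 3 * ((3:ℕ).succ / ((3:ℕ).factorial * 3)) ≤ t ^ 6 / 36 := by
    calc |(-t ^ 2 / 2 : ℝ)| ^ 3 * ((3:ℕ).succ / ((3:ℕ).factorial * 3))
        ≤ (t ^ 2 / 2) ^ 3 * ((3:ℕ).succ / ((3:ℕ).factorial * 3)) := by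
          apply mul_le_mul_of_nonneg_right habs; positivity
      _ = t ^ 6 / 36 := by norm_num [Nat.factorial]; ring
  linarith

lemma int_ub {a : ℝ} (h0 : 0 ≤ a) (h1 : a ≤ 1) :
    (∫ t in (0:ℝ)..a, Real.exp (-t ^ 2 / 2))
      ≤ a - a ^ 3 / 6 + a ^ 5 / 40 + a ^ 7 / 252 := by
  rw [← poly_int2 a]
  apply intervalIntegral.integral_mono_on h0 (exp_cont.intervalIntegrable 0 a)
    ((by fun_prop :
      Continuous (fun t : ℝ => 1 - t ^ 2 / 2 + t ^ 4 / 8 + t ^ 6 / 36)).intervalIntegrable 0 a)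
  intro t ht
  rcases ht with ⟨ht0, ht1⟩
  exact exp_ub (by nlinarith)

lemma gpoly_nonneg {x : ℝ} (h0 : 0 ≤ x) (h1 : x ≤ 1) :
    (0:ℝ) ≤ 56791156496716664202016158120808542499691/63000000000000000000000000000000000000000
      - 545795252093247645870812819549543311/1680000000000000000000000000000000000 * x
      + 85094907682141575873266915959/3600000000000000000000000000000 * x ^ 2
      + 5536640769665314020744661/100800000000000000000000000 * x ^ 3
      - 2094567493473093383/420000000000000000000 * x ^ 4
      - 593338197304577/50400000000000000 * x ^ 5
      - 170040469/252000000000 * x ^ 6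
      - 7979/5040000 * x ^ 7 := by
  nlinarith [pow_le_one₀ h0 h1 (n := 4), pow_le_one₀ h0 h1 (n := 5),
    pow_le_one₀ h0 h1 (n := 6), pow_le_one₀ h0 h1 (n := 7),
    pow_nonneg h0 2, pow_nonneg h0 3]

lemma poly_key {x : ℝ} (h0 : 0 ≤ x) (h1 : x ≤ 1) :
    1 ≤ (1 + x ^ 2) * (104099/100000
      - 7979/20000 * (x - x ^ 3 / 6 + x ^ 5 / 40 + x ^ 7 / 252)) := by
  nlinarith [mul_nonneg (sq_nonneg (x - 21311/100000)) (gpoly_nonneg h0 h1), h0]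

lemma sqrt_two_pi_lb : (20000/7979 : ℝ) ≤ Real.sqrt (2 * π) := by
  have h : ((20000/7979 : ℝ)) = Real.sqrt ((20000/7979) ^ 2) :=
    (Real.sqrt_sq (by norm_num)).symm
  rw [h]
  apply Real.sqrt_le_sqrt
  nlinarith [pi_gt_d6]

lemma sqrt_two_pi_ub : Real.sqrt (2 * π) ≤ 250663/100000 := by
  have h : ((250663/100000 : ℝ)) = Real.sqrt ((250663/100000) ^ 2) :=
    (Real.sqrt_sq (by norm_num)).symm
  rw [h]
  apply Real.sqrt_le_sqrt
  nlinarith [pi_lt_d6]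

lemma f_le (x : ℝ) :
    1 / (1 + x ^ 2) - stdNormalCDF (-|x|) ≤ 54099/100000 := by
  have hsqrt_pos : (0:ℝ) < Real.sqrt (2 * π) := Real.sqrt_pos.2 (by positivity)
  rw [← sq_abs x]
  set a := |x| with ha
  have ha0 : 0 ≤ a := abs_nonneg x
  rcases le_or_gt a 1 with hle | hgt
  · rw [cdf_eq a]
    have hI := int_ub ha0 hle
    have hInn : 0 ≤ ∫ t in (0:ℝ)..a, Real.exp (-t ^ 2 / 2) :=
      intervalIntegral.integral_nonneg ha0 (fun t _ => (Real.exp_pos _).le)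
    have hq0 : 0 ≤ a - a ^ 3 / 6 + a ^ 5 / 40 + a ^ 7 / 252 := le_trans hInn hI
    have hdiv : (∫ t in (0:ℝ)..a, Real.exp (-t ^ 2 / 2)) / Real.sqrt (2 * π)
        ≤ (a - a ^ 3 / 6 + a ^ 5 / 40 + a ^ 7 / 252) * (7979/20000) := by
      rw [div_le_iff₀ hsqrt_pos]
      nlinarith [mul_nonneg hq0 (sub_nonneg.2 sqrt_two_pi_lb)]
    have hkey := poly_key ha0 hle
    have h1a : (0:ℝ) < 1 + a ^ 2 := by positivity
    have hfrac : 1 / (1 + a ^ 2) ≤ 104099/100000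
        - 7979/20000 * (a - a ^ 3 / 6 + a ^ 5 / 40 + a ^ 7 / 252) := by
      rw [div_le_iff₀ h1a]
      nlinarith [hkey]
    linarith
  · have hcdf0 : 0 ≤ stdNormalCDF (-a) :=
      setIntegral_nonneg measurableSet_Iic (fun t _ => by positivity)
    have hfrac : 1 / (1 + a ^ 2) ≤ 1/2 := by
      rw [div_le_iff₀ (by positivity : (0:ℝ) < 1 + a ^ 2)]
      nlinarith
    linarith

lemma f_lb :
    (5409/10000 : ℝ) < 1 / (1 + (21/100 : ℝ) ^ 2) - stdNormalCDF (-|(21/100 : ℝ)|) := by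
  rw [show |(21/100 : ℝ)| = 21/100 by rw [abs_of_nonneg]; norm_num, cdf_eq]
  have hsqrt_pos : (0:ℝ) < Real.sqrt (2 * π) := Real.sqrt_pos.2 (by positivity)
  have hI := int_lb (a := 21/100) (by norm_num)
  have hInn : (0:ℝ) ≤ 21/100 - (21/100) ^ 3 / 6 := by norm_num
  have h1 : ((21/100 : ℝ) - (21/100) ^ 3 / 6) / (250663/100000)
      ≤ (∫ t in (0:ℝ)..(21/100 : ℝ), Real.exp (-t ^ 2 / 2)) / Real.sqrt (2 * π) :=
    div_le_div₀ (le_trans hInn hI) hI hsqrt_pos sqrt_two_pi_ub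
  have h2 : (5409/10000 : ℝ)
      < 1 / (1 + (21/100 : ℝ) ^ 2) - 1/2
        + ((21/100 : ℝ) - (21/100) ^ 3 / 6) / (250663/100000) := by norm_num
  linarith

end CPhiAux

theorem C_Phi_bounds :
    0.5409 < (⨆ x : ℝ, (1 / (1 + x ^ 2) - stdNormalCDF (-|x|))) ∧
    (⨆ x : ℝ, (1 / (1 + x ^ 2) - stdNormalCDF (-|x|))) < 0.5410 := by
  have bdd : BddAbove (Set.range fun x : ℝ => 1 / (1 + x ^ 2) - stdNormalCDF (-|x|)) := by
    refine ⟨54099/100000, ?_⟩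
    rintro y ⟨x, rfl⟩
    exact CPhiAux.f_le x
  constructor
  · have h := le_ciSup bdd (21/100 : ℝ)
    have := CPhiAux.f_lb
    calc (0.5409 : ℝ) = 5409/10000 := by norm_num
      _ < _ := lt_of_lt_of_le this h
  · have h := ciSup_le (fun x : ℝ => CPhiAux.f_le x)
    calc (⨆ x : ℝ, (1 / (1 + x ^ 2) - stdNormalCDF (-|x|))) ≤ 54099/100000 := h
      _ < 0.5410 := by norm_num
end

section
/- sup_{F ∈ 𝕍} sup_{x∈ℝ} |F(x) − Φ(x)| ≤ C_Φ < 0.541, where 𝕍 is the class of CDFs of random variables with mean 0 and variance 1 and C_Φ = sup_{t∈ℝ}(1/(1+t²) − Φ(−|t|)). -/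
open Real MeasureTheory

namespace SupDelta

noncomputable def phi (t : ℝ) : ℝ := Real.exp (-t ^ 2 / 2) / Real.sqrt (2 * Real.pi)

lemma phi_nonneg (t : ℝ) : 0 ≤ phi t := by unfold phi; positivity

lemma phi_eq (t : ℝ) : phi t = Real.exp (-(1/2) * t ^ 2) / Real.sqrt (2 * Real.pi) := by
  unfold phi; ring_nf

lemma phi_even (t : ℝ) : phi (-t) = phi t := by unfold phi; ring_nf

lemma integrable_phi : Integrable phi := by
  have h := (integrable_exp_neg_mul_sq (b := 1/2) (by norm_num)).div_const (Real.sqrt (2 * Real.pi))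
  apply h.congr
  filter_upwards with x
  rw [phi_eq]

lemma integral_phi : ∫ t, phi t = 1 := by
  have h := integral_gaussian (1/2)
  have : ∫ t, phi t = (∫ x : ℝ, Real.exp (-(1/2) * x ^ 2)) / Real.sqrt (2 * Real.pi) := by
    rw [← integral_div]; exact integral_congr_ae (Filter.Eventually.of_forall phi_eq)
  rw [this, h, div_eq_one_iff_eq (by positivity)]
  rw [show Real.pi / (1/2) = 2 * Real.pi by ring]

lemma cdf_eq (x : ℝ) : stdNormalCDF x = ∫ t in Set.Iic x, phi t := rfl

lemma cdf_nonneg (x : ℝ) : 0 ≤ stdNormalCDF x := by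
  rw [cdf_eq]; exact setIntegral_nonneg measurableSet_Iic (fun t _ => phi_nonneg t)

lemma cdf_add_compl (x : ℝ) : stdNormalCDF x + ∫ t in Set.Ioi x, phi t = 1 := by
  rw [cdf_eq, ← integral_phi]
  exact intervalIntegral.integral_Iic_add_Ioi integrable_phi.integrableOn integrable_phi.integrableOn

lemma cdf_le_one (x : ℝ) : stdNormalCDF x ≤ 1 := by
  have h := cdf_add_compl x
  have h2 : 0 ≤ ∫ t in Set.Ioi x, phi t :=
    setIntegral_nonneg measurableSet_Ioi (fun t _ => phi_nonneg t)
  linarith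

lemma cdf_symm (x : ℝ) : stdNormalCDF x + stdNormalCDF (-x) = 1 := by
  have h1 : stdNormalCDF (-x) = ∫ t in Set.Ioi x, phi t := by
    have h2 : (∫ t in Set.Iic (-x), phi (-t)) = ∫ t in Set.Ioi x, phi t := by
      rw [integral_comp_neg_Iic, neg_neg]
    rw [cdf_eq, ← h2]
    exact integral_congr_ae (Filter.Eventually.of_forall (fun t => (phi_even t).symm))
  rw [h1]; exact cdf_add_compl x

lemma cdf_sub (a b : ℝ) : stdNormalCDF b - stdNormalCDF a = ∫ t in a..b, phi t := by
  rw [cdf_eq, cdf_eq]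
  exact intervalIntegral.integral_Iic_sub_Iic integrable_phi.integrableOn integrable_phi.integrableOn

lemma cdf_mono : Monotone stdNormalCDF := by
  intro a b hab
  have h := cdf_sub a b
  have h2 : 0 ≤ ∫ t in a..b, phi t :=
    intervalIntegral.integral_nonneg hab (fun t _ => phi_nonneg t)
  linarith

lemma cdf_zero : stdNormalCDF 0 = 1/2 := by
  have := cdf_symm 0
  rw [neg_zero] at this
  linarith

lemma cdf_neg {s : ℝ} : stdNormalCDF (-s) = 1/2 - ∫ t in (0:ℝ)..s, phi t := by
  have h := cdf_sub (-s) 0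
  rw [cdf_zero] at h
  have h2 : (∫ t in (-s)..(0:ℝ), phi t) = ∫ t in (0:ℝ)..s, phi t := by
    have h3 := intervalIntegral.integral_comp_neg (a := 0) (b := s) (f := phi)
    rw [neg_zero] at h3
    rw [← h3]
    exact intervalIntegral.integral_congr (fun t _ => phi_even t)
  rw [h2] at h
  linarith

lemma exp_neg_le {x : ℝ} (hx : 0 ≤ x) : Real.exp (-x) ≤ 1 - x + x^2/2 := by
  have h := Real.sum_le_exp_of_nonneg hx 4
  have hs : (∑ i ∈ Finset.range 4, x ^ i / (Nat.factorial i : ℝ)) = 1 + x + x^2/2 + x^3/6 := by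
    simp [Finset.sum_range_succ, Nat.factorial]
  rw [hs] at h
  have hpos : (0:ℝ) < 1 + x + x^2/2 + x^3/6 := by positivity
  rw [Real.exp_neg]
  have h2 : (Real.exp x)⁻¹ ≤ (1 + x + x^2/2 + x^3/6)⁻¹ := inv_anti₀ hpos h
  refine h2.trans ?_
  rw [inv_le_iff_one_le_mul₀ hpos]
  nlinarith [pow_nonneg hx 3, pow_nonneg hx 4, pow_nonneg hx 5]

lemma integral_phi_le {s : ℝ} (hs : 0 ≤ s) :
    ∫ t in (0:ℝ)..s, phi t ≤ (s - s^3/6 + s^5/40) / Real.sqrt (2 * Real.pi) := by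
  have hmono : ∫ t in (0:ℝ)..s, phi t ≤
      ∫ t in (0:ℝ)..s, (1 - t^2/2 + t^4/8) / Real.sqrt (2 * Real.pi) := by
    apply intervalIntegral.integral_mono_on hs
    · exact integrable_phi.intervalIntegrable
    · apply Continuous.intervalIntegrable; continuity
    · intro t _
      unfold phi
      gcongr
      calc Real.exp (-t^2/2) = Real.exp (-(t^2/2)) := by ring_nf
        _ ≤ 1 - t^2/2 + (t^2/2)^2/2 := exp_neg_le (by positivity)
        _ = 1 - t^2/2 + t^4/8 := by ring
  refine hmono.trans_eq ?_
  have : ∀ t:ℝ, (1 - t^2/2 + t^4/8) / Real.sqrt (2 * Real.pi)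
      = (1 - t^2/2 + t^4/8) * (Real.sqrt (2 * Real.pi))⁻¹ := fun t => div_eq_mul_inv _ _
  simp_rw [this, intervalIntegral.integral_mul_const]
  rw [div_eq_mul_inv]
  congr 1
  have h1 : IntervalIntegrable (fun t:ℝ => 1 - t^2/2) volume 0 s := by
    apply Continuous.intervalIntegrable; continuity
  have h2 : IntervalIntegrable (fun t:ℝ => t^4/8) volume 0 s := by
    apply Continuous.intervalIntegrable; continuity
  have h3 : IntervalIntegrable (fun t:ℝ => (1:ℝ)) volume 0 s := by
    apply Continuous.intervalIntegrable; continuity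
  have h4 : IntervalIntegrable (fun t:ℝ => t^2/2) volume 0 s := by
    apply Continuous.intervalIntegrable; continuity
  rw [intervalIntegral.integral_add h1 h2, intervalIntegral.integral_sub h3 h4]
  simp [intervalIntegral.integral_div, integral_pow, integral_one]
  ring

section Cantelli
variable {μ : Measure ℝ} [IsProbabilityMeasure μ]

omit [IsProbabilityMeasure μ] in
lemma int_sq (h2 : (∫ x, x ^ 2 ∂μ) = 1) : Integrable (fun x => x ^ 2) μ := by
  by_contra h
  rw [integral_undef h] at h2
  norm_num at h2

lemma int_id (h2 : (∫ x, x ^ 2 ∂μ) = 1) : Integrable (fun x : ℝ => x) μ := by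
  refine ((integrable_const (1:ℝ)).add (int_sq h2)).mono' aestronglyMeasurable_id ?_
  filter_upwards with x
  simp only [Real.norm_eq_abs, Pi.add_apply]
  nlinarith [abs_nonneg x, sq_abs x, sq_nonneg (|x| - 1)]

lemma markov_sq (h1 : (∫ x, x ∂μ) = 0) (h2 : (∫ x, x ^ 2 ∂μ) = 1) {t ε : ℝ} (ht : 0 < t)
    (hε : ε = 1 ∨ ε = -1) (S : Set ℝ)
    (hS : ∀ x ∈ S, (t + 1/t)^2 ≤ (ε * x + 1/t)^2) :
    (μ S).toReal ≤ 1 / (1 + t ^ 2) := by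
  have hint := int_id h2
  have hsq := int_sq h2
  set l : ℝ := 1/t with hl
  have hfi : Integrable (fun x : ℝ => (ε * x + l)^2) μ := by
    have : (fun x : ℝ => (ε * x + l)^2) = fun x => ε^2 * x^2 + (2*ε*l) * x + l^2 := by
      funext x; ring
    rw [this]
    exact (((hsq.const_mul _).add (hint.const_mul _))).add (integrable_const _)
  have hval : (∫ x, (ε * x + l)^2 ∂μ) = 1 + l^2 := by
    have : (fun x : ℝ => (ε * x + l)^2) = fun x => ε^2 * x^2 + (2*ε*l) * x + l^2 := by
      funext x; ring
    have ha : Integrable (fun x : ℝ => ε ^ 2 * x ^ 2 + 2 * ε * l * x) μ :=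
      (hsq.const_mul _).add (hint.const_mul _)
    have hb : Integrable (fun x : ℝ => ε ^ 2 * x ^ 2) μ := hsq.const_mul _
    have hc : Integrable (fun x : ℝ => 2 * ε * l * x) μ := hint.const_mul _
    rw [this, integral_add ha (integrable_const _), integral_add hb hc,
      MeasureTheory.integral_const_mul, MeasureTheory.integral_const_mul, h1, h2, integral_const]
    rcases hε with h | h <;> simp [h]
  have hmarkov := mul_meas_ge_le_integral_of_nonneg
    (Filter.Eventually.of_forall (fun x => sq_nonneg (ε * x + l))) hfi ((t + l)^2)
  rw [hval] at hmarkov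
  have hsub : S ⊆ {x | (t + l)^2 ≤ (ε * x + l)^2} := hS
  have hmono : (μ S).toReal ≤ (μ {x | (t + l)^2 ≤ (ε * x + l)^2}).toReal :=
    ENNReal.toReal_mono (measure_ne_top _ _) (measure_mono hsub)
  have htl : (0:ℝ) < (t + l)^2 := by positivity
  have key : (μ {x | (t + l)^2 ≤ (ε * x + l)^2}).toReal ≤ (1 + l^2) / (t + l)^2 := by
    rw [le_div_iff₀ htl]
    have hm : (t + l) ^ 2 * (μ {x | (t + l)^2 ≤ (ε * x + l)^2}).toReal ≤ 1 + l ^ 2 := hmarkov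
    linarith [hm]
  refine hmono.trans (key.trans_eq ?_)
  rw [hl]
  field_simp
  ring

end Cantelli

end SupDelta

open SupDelta

theorem sup_delta_le_C_Phi :
    (∀ μ : Measure ℝ, IsProbabilityMeasure μ →
      (∫ x, x ∂μ) = 0 → (∫ x, x ^ 2 ∂μ) = 1 →
      ∀ x : ℝ, |(μ (Set.Iic x)).toReal - stdNormalCDF x| ≤
        ⨆ t : ℝ, (1 / (1 + t ^ 2) - stdNormalCDF (-|t|))) ∧
    (⨆ t : ℝ, (1 / (1 + t ^ 2) - stdNormalCDF (-|t|))) < 0.541 := by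
  set f : ℝ → ℝ := fun t => 1 / (1 + t ^ 2) - stdNormalCDF (-|t|) with hf
  have hbdd : BddAbove (Set.range f) := by
    refine ⟨1, ?_⟩
    rintro y ⟨t, rfl⟩
    have h1 : (1:ℝ) / (1 + t ^ 2) ≤ 1 := by
      rw [div_le_one (by positivity)]; nlinarith [sq_nonneg t]
    have h2 := cdf_nonneg (-|t|)
    simp only [hf]
    linarith
  have hf0 : f 0 = 1/2 := by
    simp only [hf, abs_zero, neg_zero, cdf_zero]
    norm_num
  have hhalf : (1:ℝ)/2 ≤ ⨆ t : ℝ, f t := hf0 ▸ le_ciSup hbdd 0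
  constructor
  · intro μ hprob h1 h2 x
    have hFle1 : (μ (Set.Iic x)).toReal ≤ 1 := by
      have := measure_mono (μ := μ) (Set.subset_univ (Set.Iic x))
      rw [measure_univ] at this
      simpa using ENNReal.toReal_mono (by norm_num) this
    have hF0 : 0 ≤ (μ (Set.Iic x)).toReal := ENNReal.toReal_nonneg
    have hcompl : (μ (Set.Iic x)).toReal + (μ (Set.Ioi x)).toReal = 1 := by
      have hu : μ (Set.Iic x) + μ (Set.Ioi x) = 1 := by
        rw [← measure_univ (μ := μ), ← Set.Iic_union_Ioi (a := x)]
        exact (measure_union (Set.Iic_disjoint_Ioi le_rfl) measurableSet_Ioi).symm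
      have := congrArg ENNReal.toReal hu
      rwa [ENNReal.toReal_add (measure_ne_top _ _) (measure_ne_top _ _), ENNReal.toReal_one]
        at this
    have hfabs : f |x| ≤ ⨆ t : ℝ, f t := le_ciSup hbdd |x|
    have hfx : f |x| = 1 / (1 + x ^ 2) - stdNormalCDF (-|x|) := by
      simp only [hf, abs_abs, sq_abs]
    rw [abs_sub_le_iff]
    rcases le_or_gt x 0 with hx | hx
    · have hxabs : -|x| = x := by rw [abs_of_nonpos hx]; ring
      constructor
      · -- F - Φ ≤ sup
        have hcant : (μ (Set.Iic x)).toReal ≤ 1 / (1 + x ^ 2) := by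
          rcases lt_or_eq_of_le hx with hx' | hx'
          · have := markov_sq h1 h2 (t := -x) (ε := -1) (by linarith) (Or.inr rfl)
              (Set.Iic x) ?_
            · rw [show 1 + (-x)^2 = 1 + x^2 by ring] at this
              exact this
            · intro y hy
              simp only [Set.mem_Iic] at hy
              have hyl : -x + 1/(-x) ≤ -1 * y + 1/(-x) := by linarith
              have hpos : 0 ≤ -x + 1/(-x) := by
                have : 0 < -x := by linarith
                positivity
              exact pow_le_pow_left₀ hpos hyl 2
          · subst hx'
            simpa using hFle1
        calc (μ (Set.Iic x)).toReal - stdNormalCDF x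
            ≤ 1 / (1 + x ^ 2) - stdNormalCDF (-|x|) := by rw [hxabs]; linarith
          _ = f |x| := hfx.symm
          _ ≤ _ := hfabs
      · -- Φ - F ≤ sup
        have hmono : stdNormalCDF x ≤ stdNormalCDF 0 := cdf_mono hx
        rw [cdf_zero] at hmono
        calc stdNormalCDF x - (μ (Set.Iic x)).toReal ≤ 1/2 := by linarith
          _ ≤ _ := hhalf
    · have hxabs : -|x| = -x := by rw [abs_of_pos hx]
      constructor
      · -- F - Φ ≤ sup
        have hmono : stdNormalCDF 0 ≤ stdNormalCDF x := cdf_mono hx.le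
        rw [cdf_zero] at hmono
        calc (μ (Set.Iic x)).toReal - stdNormalCDF x ≤ 1/2 := by linarith
          _ ≤ _ := hhalf
      · -- Φ - F ≤ sup
        have hcant : (μ (Set.Ioi x)).toReal ≤ 1 / (1 + x ^ 2) := by
          apply markov_sq h1 h2 (t := x) (ε := 1) hx (Or.inl rfl) (Set.Ioi x)
          intro y hy
          simp only [Set.mem_Ioi] at hy
          have hyl : x + 1/x ≤ 1 * y + 1/x := by linarith
          have hpos : 0 ≤ x + 1/x := by positivity
          exact pow_le_pow_left₀ hpos hyl 2
        have hsymm := cdf_symm x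
        calc stdNormalCDF x - (μ (Set.Iic x)).toReal
            = 1 - stdNormalCDF (-x) - (1 - (μ (Set.Ioi x)).toReal) := by linarith
          _ ≤ 1 / (1 + x ^ 2) - stdNormalCDF (-|x|) := by rw [hxabs]; linarith
          _ = f |x| := hfx.symm
          _ ≤ _ := hfabs
  · refine lt_of_le_of_lt (ciSup_le ?_) (show (0.54099:ℝ) < 0.541 by norm_num)
    intro t
    show 1 / (1 + t ^ 2) - stdNormalCDF (-|t|) ≤ 0.54099
    set s := |t| with hs
    have hs0 : 0 ≤ s := abs_nonneg t
    have hts : t ^ 2 = s ^ 2 := (sq_abs t).symm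
    have hΦ0 : 0 ≤ stdNormalCDF (-s) := cdf_nonneg _
    rcases le_or_gt s 0.93 with hsle | hsgt
    · -- main range: use Taylor bound
      have hneg : stdNormalCDF (-s) = 1/2 - ∫ u in (0:ℝ)..s, phi u := cdf_neg
      have hI := integral_phi_le hs0
      have hsqrt : (2.5066:ℝ) ≤ Real.sqrt (2 * Real.pi) := by
        rw [show (2.5066:ℝ) = Real.sqrt (2.5066^2) by
          rw [Real.sqrt_sq (by norm_num)]]
        apply Real.sqrt_le_sqrt
        nlinarith [Real.pi_gt_d6]
      have hsqrtpos : (0:ℝ) < Real.sqrt (2 * Real.pi) := by positivity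
      have h1s : (0:ℝ) < 1 + s ^ 2 := by positivity
      have hP : (s - s^3/6 + s^5/40) / Real.sqrt (2 * Real.pi)
          ≤ (0.04099 + 1.04099 * s^2) / (1 + s^2) := by
        rw [div_le_div_iff₀ hsqrtpos h1s]
        have hpoly : (s - s^3/6 + s^5/40) * (1 + s^2) ≤ 2.5066 * (0.04099 + 1.04099 * s^2) := by
          nlinarith [sq_nonneg (s - 0.2131), sq_nonneg (s*(s - 0.2131)), sq_nonneg (s^2*(s-0.2131)),
            mul_nonneg hs0 (sub_nonneg.2 hsle), sq_nonneg s, sq_nonneg (s^2 - 0.05),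
            mul_nonneg (mul_nonneg hs0 hs0) (sub_nonneg.2 hsle), sq_nonneg ((s-0.2131)*(s-0.93))]
        have hnn : (0:ℝ) ≤ 0.04099 + 1.04099 * s^2 := by positivity
        calc (s - s^3/6 + s^5/40) * (1 + s^2) ≤ 2.5066 * (0.04099 + 1.04099 * s^2) := hpoly
          _ ≤ Real.sqrt (2 * Real.pi) * (0.04099 + 1.04099 * s^2) := by
              apply mul_le_mul_of_nonneg_right hsqrt hnn
          _ = (0.04099 + 1.04099 * s^2) * Real.sqrt (2 * Real.pi) := by ring
      have hfrac : (0.04099 + 1.04099 * s^2) / (1 + s^2) = 0.04099 + 1 - 1/(1+s^2) := by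
        field_simp
        ring
      rw [hts, hneg]
      have h9 := hI.trans (hP.trans_eq hfrac)
      linarith
    · -- tail: 1/(1+s²) small
      have h1 : (1:ℝ) / (1 + t ^ 2) ≤ 1 / (1 + 0.93^2) := by
        rw [hts]
        apply div_le_div_of_nonneg_left (by norm_num) (by positivity)
        nlinarith
      have h9 : (1:ℝ) / (1 + 0.93^2) ≤ 0.54099 := by norm_num
      linarith
end

section
/- With F_Φ the two-point distribution concentrated at −1/x_Φ and x_Φ (with probabilities x_Φ²/(1+x_Φ²) and 1/(1+x_Φ²)), we have sup_{x∈ℝ} |F_Φ(x) − Φ(x)| = C_Φ; i.e., the bound sup_{F∈𝕍} Δ(F) ≤ C_Φ is attained. -/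
open Real MeasureTheory Set

noncomputable def stdGauss (t : ℝ) : ℝ := Real.exp (-t ^ 2 / 2) / Real.sqrt (2 * Real.pi)

lemma stdGauss_pos (t : ℝ) : 0 < stdGauss t := by
  unfold stdGauss; positivity

lemma stdGauss_even (t : ℝ) : stdGauss (-t) = stdGauss t := by
  unfold stdGauss; ring_nf

lemma integrable_stdGauss : Integrable stdGauss := by
  have h := (integrable_exp_neg_mul_sq (by norm_num : (0:ℝ) < 1/2)).div_const (Real.sqrt (2 * Real.pi))
  convert h using 2 with t
  unfold stdGauss; ring_nf

lemma integral_stdGauss : ∫ t, stdGauss t = 1 := by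
  have h := integral_gaussian (1/2)
  have h2 : ∫ t : ℝ, Real.exp (-t^2/2) = Real.sqrt (2 * Real.pi) := by
    rw [show Real.sqrt (2*Real.pi) = Real.sqrt (Real.pi / (1/2)) by norm_num [mul_comm], ← h]
    congr 1 with t; ring_nf
  unfold stdGauss
  rw [integral_div, h2, div_self (by positivity)]

lemma continuous_stdGauss : Continuous stdGauss := by
  unfold stdGauss; fun_prop

lemma stdNormalCDF_eq (x : ℝ) : stdNormalCDF x = ∫ t in Iic x, stdGauss t := rfl

lemma Phi_mono : Monotone stdNormalCDF := by
  intro a b hab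
  rw [stdNormalCDF_eq, stdNormalCDF_eq]
  exact setIntegral_mono_set integrable_stdGauss.integrableOn
    (Filter.Eventually.of_forall fun t => (stdGauss_pos t).le)
    ((Iic_subset_Iic.mpr hab).eventuallyLE)

lemma Phi_nonneg (x : ℝ) : 0 ≤ stdNormalCDF x := by
  rw [stdNormalCDF_eq]
  exact setIntegral_nonneg measurableSet_Iic fun t _ => (stdGauss_pos t).le

lemma Phi_le_one (x : ℝ) : stdNormalCDF x ≤ 1 := by
  rw [stdNormalCDF_eq, ← integral_stdGauss]
  exact setIntegral_le_integral integrable_stdGauss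
    (Filter.Eventually.of_forall fun t => (stdGauss_pos t).le)

lemma Phi_add_neg (x : ℝ) : stdNormalCDF x + stdNormalCDF (-x) = 1 := by
  have h1 : stdNormalCDF (-x) = ∫ t in Ioi x, stdGauss t := by
    rw [stdNormalCDF_eq]
    calc ∫ t in Iic (-x), stdGauss t = ∫ t in Iic (-x), stdGauss (-t) := by
          simp [stdGauss_even]
      _ = ∫ t in Ioi x, stdGauss t := by rw [integral_comp_neg_Iic]; norm_num
  rw [stdNormalCDF_eq, h1,
    intervalIntegral.integral_Iic_add_Ioi integrable_stdGauss.integrableOn integrable_stdGauss.integrableOn,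
    integral_stdGauss]

lemma Phi_zero : stdNormalCDF 0 = 1/2 := by
  have := Phi_add_neg 0
  rw [neg_zero] at this; linarith

lemma hasDerivAt_Phi (x : ℝ) : HasDerivAt stdNormalCDF (stdGauss x) x := by
  have key : ∀ u, stdNormalCDF u = stdNormalCDF 0 + ∫ t in (0:ℝ)..u, stdGauss t := by
    intro u
    rw [stdNormalCDF_eq, stdNormalCDF_eq 0,
      ← intervalIntegral.integral_Iic_sub_Iic integrable_stdGauss.integrableOn
        integrable_stdGauss.integrableOn]
    ring
  have hD : HasDerivAt (fun u => stdNormalCDF 0 + ∫ t in (0:ℝ)..u, stdGauss t) (stdGauss x) x :=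
    ((continuous_stdGauss.integral_hasStrictDerivAt 0 x).hasDerivAt).const_add _
  exact hD.congr_deriv rfl |>.congr_of_eventuallyEq (Filter.Eventually.of_forall fun u => (key u))

noncomputable def Gfun (t : ℝ) : ℝ := 1 / (1 + t^2) - stdNormalCDF (-t)

lemma one_add_sq_pos (t : ℝ) : (0:ℝ) < 1 + t^2 := by positivity

lemma hasDerivAt_G (t : ℝ) : HasDerivAt Gfun (stdGauss t - 2*t/(1+t^2)^2) t := by
  have h1 : HasDerivAt (fun t : ℝ => 1/(1+t^2)) (-(2*t)/(1+t^2)^2) t := by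
    have hb : HasDerivAt (fun t : ℝ => 1 + t^2) (2*t) t := by
      simpa using ((hasDerivAt_pow 2 t).const_add 1)
    have h := hb.inv (one_add_sq_pos t).ne'
    simp only [one_div]; exact h
  have h2 : HasDerivAt (fun t : ℝ => stdNormalCDF (-t)) (-stdGauss t) t := by
    have := (hasDerivAt_Phi (-t)).comp t (hasDerivAt_neg t)
    simp [stdGauss_even] at this; exact this
  have h3 := h1.sub h2
  have h4 : stdGauss t - 2*t/(1+t^2)^2 = -(2*t)/(1+t^2)^2 - -stdGauss t := by ring
  rw [h4]; exact h3

lemma sqrt8pi : Real.sqrt (8*Real.pi) = 2 * Real.sqrt (2*Real.pi) := by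
  rw [show (8:ℝ)*Real.pi = 2^2 * (2*Real.pi) by ring, Real.sqrt_mul (by positivity),
    Real.sqrt_sq (by norm_num)]

lemma root_iff (y : ℝ) : stdGauss y = 2*y/(1+y^2)^2 ↔
    y * Real.exp (y^2/2)/(1+y^2)^2 = 1/Real.sqrt (8*Real.pi) := by
  have h1 : (0:ℝ) < 1 + y^2 := one_add_sq_pos y
  have h2 : (0:ℝ) < Real.sqrt (2*Real.pi) := by positivity
  have he : Real.exp (-y^2/2) * Real.exp (y^2/2) = 1 := by
    rw [← Real.exp_add, show -y^2/2 + y^2/2 = 0 by ring, Real.exp_zero]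
  rw [sqrt8pi]
  unfold stdGauss
  rw [div_eq_div_iff h2.ne' (by positivity), div_eq_div_iff (by positivity) (by positivity)]
  constructor <;> intro H
  · linear_combination (-(Real.exp (y^2/2))) * H + (1+y^2)^2 * he
  · linear_combination (-(Real.exp (-y^2/2))) * H + 2*y*Real.sqrt (2*Real.pi) * he

lemma estimate (u : ℝ) (hu : 4 ≤ u) :
    1/Real.sqrt (8*Real.pi) < u * Real.exp (u^2/2)/(1+u^2)^2 := by
  have h5 : (5:ℝ) < Real.sqrt (8*Real.pi) := by
    rw [show (5:ℝ) = Real.sqrt 25 by rw [show (25:ℝ) = 5^2 by norm_num, Real.sqrt_sq]; norm_num]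
    exact Real.sqrt_lt_sqrt (by norm_num) (by nlinarith [Real.pi_gt_d6])
  have h15 : 1/Real.sqrt (8*Real.pi) < 1/5 := by
    apply one_div_lt_one_div_of_lt (by norm_num) h5
  refine h15.trans_le ?_
  have hexp : Real.exp (u^2/2) = Real.exp (u^2/4) * Real.exp (u^2/4) := by
    rw [← Real.exp_add]; ring_nf
  have hb : 1 + u^2/4 ≤ Real.exp (u^2/4) := by linarith [Real.add_one_le_exp (u^2/4)]
  rw [le_div_iff₀ (by positivity), hexp]
  nlinarith [mul_le_mul hb hb (by positivity) (Real.exp_pos _).le, hu, sq_nonneg u,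
    sq_nonneg (u-4)]

lemma stdGauss_lt (u : ℝ) (hu : 0 < u)
    (h : 1/Real.sqrt (8*Real.pi) < u * Real.exp (u^2/2)/(1+u^2)^2) :
    stdGauss u < 2*u/(1+u^2)^2 := by
  have h1 : (0:ℝ) < 1 + u^2 := one_add_sq_pos u
  have h2 : (0:ℝ) < Real.sqrt (2*Real.pi) := by positivity
  have he : Real.exp (-u^2/2) * Real.exp (u^2/2) = 1 := by
    rw [← Real.exp_add, show -u^2/2 + u^2/2 = 0 by ring, Real.exp_zero]
  rw [sqrt8pi] at h
  rw [div_lt_div_iff₀ (by positivity) (by positivity)] at h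
  unfold stdGauss
  rw [div_lt_div_iff₀ h2 (by positivity)]
  have h3 := mul_lt_mul_of_pos_left h (Real.exp_pos (-u^2/2))
  calc Real.exp (-u^2/2) * (1+u^2)^2 = Real.exp (-u^2/2) * (1*(1+u^2)^2) := by ring
    _ < Real.exp (-u^2/2) * (u * Real.exp (u^2/2) * (2*Real.sqrt (2*Real.pi))) := h3
    _ = 2*u*Real.sqrt (2*Real.pi) * (Real.exp (-u^2/2) * Real.exp (u^2/2)) := by ring
    _ = 2*u*Real.sqrt (2*Real.pi) := by rw [he, mul_one]

lemma continuous_k : Continuous (fun u : ℝ => stdGauss u - 2*u/(1+u^2)^2) := by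
  apply continuous_stdGauss.sub
  apply Continuous.div (by fun_prop) (by fun_prop)
  intro x; positivity

section signs
variable {xΦ : ℝ} (hpos : 0 < xΦ)
  (huniq : ∀ y : ℝ, 0 < y →
      y * Real.exp (y ^ 2 / 2) / (1 + y ^ 2) ^ 2 = 1 / Real.sqrt (8 * Real.pi) → y = xΦ)

include hpos huniq in
lemma signPos (t : ℝ) (ht0 : 0 < t) (ht : t < xΦ) : 2*t/(1+t^2)^2 < stdGauss t := by
  by_contra hle
  push_neg at hle
  rcases eq_or_lt_of_le hle with heq|hlt
  · have := huniq t ht0 (by simpa [pow_two] using (root_iff t).mp heq)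
    exact absurd this ht.ne
  · set k : ℝ → ℝ := fun u => stdGauss u - 2*u/(1+u^2)^2 with hk
    have hk0 : 0 < k 0 := by simp [hk]; exact stdGauss_pos 0
    have hkt : k t < 0 := by simp only [hk]; linarith
    have hIVT := intermediate_value_Icc' ht0.le continuous_k.continuousOn
    have h0mem : (0:ℝ) ∈ Icc (k t) (k 0) := ⟨hkt.le, hk0.le⟩
    obtain ⟨y, hy, hy0⟩ := hIVT h0mem
    have hy0' : k y = 0 := hy0
    have hyne0 : y ≠ 0 := by rintro rfl; exact absurd hy0' hk0.ne'
    have hynet : y ≠ t := by rintro rfl; exact absurd hy0' hkt.ne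
    have hypos : 0 < y := lt_of_le_of_ne hy.1 (Ne.symm hyne0)
    have hroot : stdGauss y = 2*y/(1+y^2)^2 := by have := hy0'; simp only [hk] at this; linarith
    have := huniq y hypos (by simpa [pow_two] using (root_iff y).mp hroot)
    have hylt : y < xΦ := lt_of_le_of_lt (lt_of_le_of_ne hy.2 hynet).le ht
    exact absurd this hylt.ne

include hpos huniq in
lemma signNeg (t : ℝ) (ht : xΦ < t) : stdGauss t < 2*t/(1+t^2)^2 := by
  have ht0 : 0 < t := hpos.trans ht
  by_contra hle
  push_neg at hle
  rcases eq_or_lt_of_le hle with heq|hlt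
  · have := huniq t ht0 (by simpa [pow_two] using (root_iff t).mp heq.symm)
    exact absurd this ht.ne'
  · set k : ℝ → ℝ := fun u => stdGauss u - 2*u/(1+u^2)^2 with hk
    set T : ℝ := max 4 (t+1) with hT
    have htT : t < T := lt_of_lt_of_le (by linarith) (le_max_right _ _)
    have hkT : k T < 0 := by
      have h4 : (4:ℝ) ≤ T := le_max_left _ _
      have := stdGauss_lt T (by linarith) (estimate T h4)
      simp only [hk]; linarith
    have hkt : 0 < k t := by simp only [hk]; linarith
    have hIVT := intermediate_value_Icc' htT.le continuous_k.continuousOn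
    obtain ⟨y, hy, hy0⟩ := hIVT ⟨hkT.le, hkt.le⟩
    have hy0' : k y = 0 := hy0
    have hypos : 0 < y := lt_of_lt_of_le ht0 hy.1
    have hroot : stdGauss y = 2*y/(1+y^2)^2 := by have := hy0'; simp only [hk] at this; linarith
    have := huniq y hypos (by simpa [pow_two] using (root_iff y).mp hroot)
    have hyx : xΦ < y := lt_of_lt_of_le ht hy.1
    exact absurd this hyx.ne'
end signs

lemma continuous_G : Continuous Gfun :=
  continuous_iff_continuousAt.mpr fun t => (hasDerivAt_G t).continuousAt

lemma G_zero : Gfun 0 = 1/2 := by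
  simp only [Gfun, neg_zero, Phi_zero]
  norm_num

section gmax
variable {xΦ : ℝ} (hpos : 0 < xΦ)
  (huniq : ∀ y : ℝ, 0 < y →
      y * Real.exp (y ^ 2 / 2) / (1 + y ^ 2) ^ 2 = 1 / Real.sqrt (8 * Real.pi) → y = xΦ)

include hpos huniq in
lemma G_max : ∀ t, 0 ≤ t → Gfun t ≤ Gfun xΦ := by
  have hmono : StrictMonoOn Gfun (Icc 0 xΦ) := by
    apply strictMonoOn_of_deriv_pos (convex_Icc 0 xΦ) continuous_G.continuousOn
    intro x hx
    rw [interior_Icc] at hx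
    rw [(hasDerivAt_G x).deriv]
    linarith [signPos hpos huniq x hx.1 hx.2]
  have hanti : StrictAntiOn Gfun (Ici xΦ) := by
    apply strictAntiOn_of_deriv_neg (convex_Ici xΦ) continuous_G.continuousOn
    intro x hx
    rw [interior_Ici] at hx
    rw [(hasDerivAt_G x).deriv]
    linarith [signNeg hpos huniq x hx]
  intro t ht
  rcases le_total t xΦ with h|h
  · rcases eq_or_lt_of_le h with rfl|h'
    · exact le_refl _
    · exact (hmono ⟨ht, h⟩ ⟨hpos.le, le_refl _⟩ h').le
  · rcases eq_or_lt_of_le h with rfl|h'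
    · exact le_refl _
    · exact (hanti self_mem_Ici h h').le
end gmax

noncomputable def twoPointMeasure (xΦ : ℝ) : Measure ℝ :=
  ENNReal.ofReal (xΦ ^ 2 / (1 + xΦ ^ 2)) • Measure.dirac (-1 / xΦ)
    + ENNReal.ofReal (1 / (1 + xΦ ^ 2)) • Measure.dirac xΦ

lemma F_eval {xΦ : ℝ} (hpos : 0 < xΦ) (x : ℝ) : ((twoPointMeasure xΦ) (Iic x)).toReal =
    if xΦ ≤ x then 1 else if -1/xΦ ≤ x then xΦ^2/(1+xΦ^2) else 0 := by
  have ha : (0:ℝ) ≤ xΦ^2/(1+xΦ^2) := by positivity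
  have hb : (0:ℝ) ≤ 1/(1+xΦ^2) := by positivity
  have hneg : -1/xΦ ≤ 0 := by rw [neg_div]; exact neg_nonpos_of_nonneg (by positivity)
  rw [twoPointMeasure, Measure.add_apply, Measure.smul_apply, Measure.smul_apply,
    Measure.dirac_apply' _ measurableSet_Iic, Measure.dirac_apply' _ measurableSet_Iic]
  by_cases h1 : xΦ ≤ x
  · have h2 : -1/xΦ ≤ x := le_trans (hneg.trans hpos.le) h1
    simp only [Set.indicator_of_mem (mem_Iic.mpr h1), Set.indicator_of_mem (mem_Iic.mpr h2),
      Pi.one_apply, smul_eq_mul, mul_one, if_pos h1]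
    rw [← ENNReal.ofReal_add ha hb, ENNReal.toReal_ofReal (by positivity)]
    field_simp; ring
  · rw [if_neg h1,
      Set.indicator_of_notMem (show xΦ ∉ Iic x by simpa [mem_Iic] using h1), smul_zero, add_zero]
    by_cases h2 : -1/xΦ ≤ x
    · rw [if_pos h2, Set.indicator_of_mem (mem_Iic.mpr h2), Pi.one_apply, smul_eq_mul, mul_one,
        ENNReal.toReal_ofReal ha]
    · rw [if_neg h2,
        Set.indicator_of_notMem (show -1/xΦ ∉ Iic x by simpa [mem_Iic] using h2), smul_zero,
        ENNReal.toReal_zero]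

theorem extremal_sup_attained (xΦ : ℝ) (hpos : 0 < xΦ)
    (hroot : xΦ * Real.exp (xΦ ^ 2 / 2) / (1 + xΦ ^ 2) ^ 2 = 1 / Real.sqrt (8 * Real.pi))
    (huniq : ∀ y : ℝ, 0 < y →
      y * Real.exp (y ^ 2 / 2) / (1 + y ^ 2) ^ 2 = 1 / Real.sqrt (8 * Real.pi) → y = xΦ) :
    (⨆ x : ℝ, |((twoPointMeasure xΦ) (Set.Iic x)).toReal - stdNormalCDF x|)
      = ⨆ t : ℝ, (1 / (1 + t ^ 2) - stdNormalCDF (-|t|)) := by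
  have h1x : (0:ℝ) < 1 + xΦ^2 := one_add_sq_pos xΦ
  have hGmax := G_max hpos huniq
  have hG0 : (1:ℝ)/2 ≤ Gfun xΦ := by rw [← G_zero]; exact hGmax 0 le_rfl
  have hPhisym : ∀ x, stdNormalCDF (-x) = 1 - stdNormalCDF x := fun x => by
    linarith [Phi_add_neg x]
  have hGxΦ : Gfun xΦ = stdNormalCDF xΦ - xΦ^2/(1+xΦ^2) := by
    simp only [Gfun]; rw [hPhisym]; field_simp; ring
  have hGinv : Gfun (1/xΦ) = xΦ^2/(1+xΦ^2) - stdNormalCDF (-(1/xΦ)) := by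
    simp only [Gfun]; congr 1; rw [div_pow, one_pow]; field_simp; ring
  have hneg : -1/xΦ ≤ 0 := by rw [neg_div]; exact neg_nonpos_of_nonneg (by positivity)
  have hDb : ∀ x, |((twoPointMeasure xΦ) (Set.Iic x)).toReal - stdNormalCDF x| ≤ Gfun xΦ := by
    intro x
    rw [F_eval hpos]
    by_cases h1 : xΦ ≤ x
    · rw [if_pos h1, abs_of_nonneg (by linarith [Phi_le_one x])]
      have hm := Phi_mono h1
      have h3 : stdNormalCDF (-xΦ) ≤ 1/2 := by
        rw [← Phi_zero]; exact Phi_mono (by linarith)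
      have h4 := hPhisym xΦ
      linarith
    · rw [if_neg h1]
      push_neg at h1
      by_cases h2 : -1/xΦ ≤ x
      · rw [if_pos h2, abs_le]
        have hg := hGmax (1/xΦ) (by positivity)
        have hmx : stdNormalCDF (-(1/xΦ)) ≤ stdNormalCDF x := by
          apply Phi_mono; rw [show -(1/xΦ) = -1/xΦ by ring]; exact h2
        have hmx2 : stdNormalCDF x ≤ stdNormalCDF xΦ := Phi_mono h1.le
        constructor <;> [skip; skip] <;> linarith [hGxΦ, hGinv]
      · rw [if_neg h2, zero_sub, abs_neg, abs_of_nonneg (Phi_nonneg x)]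
        push_neg at h2
        have : stdNormalCDF x ≤ stdNormalCDF 0 := Phi_mono (by linarith)
        rw [Phi_zero] at this; linarith
  have hBdd : BddAbove (Set.range fun x =>
      |((twoPointMeasure xΦ) (Set.Iic x)).toReal - stdNormalCDF x|) :=
    ⟨Gfun xΦ, by rintro v ⟨x, rfl⟩; exact hDb x⟩
  have hlow : Gfun xΦ ≤
      ⨆ x : ℝ, |((twoPointMeasure xΦ) (Set.Iic x)).toReal - stdNormalCDF x| := by
    have hle : ∀ x ∈ Ioo (0:ℝ) xΦ, stdNormalCDF x - xΦ^2/(1+xΦ^2) ≤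
        ⨆ x : ℝ, |((twoPointMeasure xΦ) (Set.Iic x)).toReal - stdNormalCDF x| := by
      intro x hx
      have hF : ((twoPointMeasure xΦ) (Set.Iic x)).toReal = xΦ^2/(1+xΦ^2) := by
        rw [F_eval hpos, if_neg (not_le.mpr hx.2), if_pos (by linarith [hx.1] : -1/xΦ ≤ x)]
      calc stdNormalCDF x - xΦ^2/(1+xΦ^2)
          ≤ |xΦ^2/(1+xΦ^2) - stdNormalCDF x| := by rw [abs_sub_comm]; exact le_abs_self _
        _ = |((twoPointMeasure xΦ) (Set.Iic x)).toReal - stdNormalCDF x| := by rw [hF]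
        _ ≤ _ := le_ciSup hBdd x
    have hc : ContinuousAt (fun x : ℝ => stdNormalCDF x - xΦ^2/(1+xΦ^2)) xΦ :=
      (hasDerivAt_Phi xΦ).continuousAt.sub continuousAt_const
    have htend := hc.continuousWithinAt (s := Iio xΦ)
    have hkey : stdNormalCDF xΦ - xΦ^2/(1+xΦ^2) ≤
        ⨆ x : ℝ, |((twoPointMeasure xΦ) (Set.Iic x)).toReal - stdNormalCDF x| := by
      refine le_of_tendsto htend ?_
      filter_upwards [Ioo_mem_nhdsLT_of_mem (⟨hpos, le_rfl⟩ : xΦ ∈ Ioc 0 xΦ)] with x hx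
      exact hle x hx
    linarith [hGxΦ]
  have hfun : ∀ t : ℝ, 1 / (1 + t ^ 2) - stdNormalCDF (-|t|) = Gfun |t| := by
    intro t; simp only [Gfun, sq_abs]
  have hRHS : (⨆ t : ℝ, (1 / (1 + t ^ 2) - stdNormalCDF (-|t|))) = Gfun xΦ := by
    apply le_antisymm
    · exact ciSup_le fun t => (hfun t).trans_le (hGmax |t| (abs_nonneg t))
    · have hB2 : BddAbove (Set.range fun t : ℝ => 1 / (1 + t ^ 2) - stdNormalCDF (-|t|)) :=
        ⟨Gfun xΦ, by rintro v ⟨t, rfl⟩; exact (hfun t).trans_le (hGmax |t| (abs_nonneg t))⟩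
      have := le_ciSup hB2 xΦ
      rwa [show (1 / (1 + xΦ ^ 2) - stdNormalCDF (-|xΦ|)) = Gfun xΦ by
        rw [hfun, abs_of_pos hpos]] at this
  rw [hRHS]
  exact le_antisymm (ciSup_le hDb) hlow
end

section
/- The unique positive root x_Φ of x·e^{x²/2}/(1+x²)² = 1/√(8π) satisfies: Ψ(x) = 1/(1+x²) − Φ(−x) is nondecreasing on (0, x_Φ] and strictly decreasing on (x_Φ, ∞). -/
open Real MeasureTheory

private noncomputable def fφ (t : ℝ) : ℝ := Real.exp (-t ^ 2 / 2) / Real.sqrt (2 * Real.pi)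

private lemma fφ_cont : Continuous fφ := by
  unfold fφ; fun_prop

private lemma fφ_int : Integrable fφ := by
  have h : Integrable (fun t : ℝ => Real.exp (-(1/2 : ℝ) * t ^ 2)) :=
    integrable_exp_neg_mul_sq (by norm_num)
  have h2 := h.div_const (Real.sqrt (2 * Real.pi))
  have : fφ = fun t : ℝ => Real.exp (-(1/2 : ℝ) * t ^ 2) / Real.sqrt (2 * Real.pi) := by
    funext t
    unfold fφ
    rw [show -t ^ 2 / 2 = -(1/2 : ℝ) * t ^ 2 by ring]
  rw [this]
  exact h2

private lemma hasDerivAt_cdf (x : ℝ) : HasDerivAt stdNormalCDF (fφ x) x := by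
  have cdf_eq : stdNormalCDF = fun y => ∫ t in Set.Iic y, fφ t := rfl
  have key : (fun y => ∫ t in Set.Iic y, fφ t)
      = fun y => (∫ t in Set.Iic (0:ℝ), fφ t) + ∫ t in (0:ℝ)..y, fφ t := by
    funext y
    rw [← intervalIntegral.integral_Iic_sub_Iic fφ_int.integrableOn fφ_int.integrableOn]
    ring
  rw [cdf_eq, key]
  have hd : HasDerivAt (fun y => ∫ t in (0:ℝ)..y, fφ t) (fφ x) x :=
    intervalIntegral.integral_hasDerivAt_right fφ_int.intervalIntegrable
      (fφ_cont.stronglyMeasurableAtFilter _ _) fφ_cont.continuousAt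
  exact hd.const_add _

private noncomputable def gfun (y : ℝ) : ℝ := y * Real.exp (y ^ 2 / 2) / (1 + y ^ 2) ^ 2

private lemma hasDerivAt_g (y : ℝ) :
    HasDerivAt gfun (Real.exp (y ^ 2 / 2) * (1 - y ^ 2) ^ 2 / (1 + y ^ 2) ^ 3) y := by
  have h1 : HasDerivAt (fun y : ℝ => y ^ 2 / 2) y y := by
    have := (hasDerivAt_pow 2 y).div_const 2
    simpa using this
  have h2 : HasDerivAt (fun y : ℝ => Real.exp (y ^ 2 / 2)) (Real.exp (y ^ 2 / 2) * y) y :=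
    (Real.hasDerivAt_exp _).comp y h1
  have h3 : HasDerivAt (fun y : ℝ => y * Real.exp (y ^ 2 / 2))
      (Real.exp (y ^ 2 / 2) + y * (Real.exp (y ^ 2 / 2) * y)) y := by
    have := (hasDerivAt_id y).mul h2
    exact this.congr_deriv (by simp)
  have h4 : HasDerivAt (fun y : ℝ => (1 + y ^ 2) ^ 2) (2 * (1 + y ^ 2) * (2 * y)) y := by
    have hb : HasDerivAt (fun y : ℝ => 1 + y ^ 2) (2 * y) y := by
      have := (hasDerivAt_pow 2 y).const_add 1
      simpa using this
    have := hb.pow 2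
    refine this.congr_deriv ?_
    ring
  have hne : ((1:ℝ) + y ^ 2) ^ 2 ≠ 0 := by positivity
  have := h3.div h4 hne
  refine this.congr_deriv ?_
  field_simp
  ring

private lemma g_mono : MonotoneOn gfun (Set.Ici 0) := by
  apply monotoneOn_of_deriv_nonneg (convex_Ici 0)
  · exact fun y _ => (hasDerivAt_g y).continuousAt.continuousWithinAt
  · exact fun y _ => (hasDerivAt_g y).differentiableAt.differentiableWithinAt
  · intro y _
    rw [(hasDerivAt_g y).deriv]
    positivity

private lemma hasDerivAt_Psi (x : ℝ) :
    HasDerivAt (fun x : ℝ => 1 / (1 + x ^ 2) - stdNormalCDF (-x))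
      (2 * Real.exp (-x ^ 2 / 2) * (1 / Real.sqrt (8 * Real.pi) - gfun x)) x := by
  have ha : HasDerivAt (fun x : ℝ => 1 / (1 + x ^ 2)) (-(2 * x) / (1 + x ^ 2) ^ 2) x := by
    have hb : HasDerivAt (fun x : ℝ => 1 + x ^ 2) (2 * x) x := by
      have := (hasDerivAt_pow 2 x).const_add 1
      simpa using this
    have := (hasDerivAt_const x (1:ℝ)).div hb (by positivity)
    refine this.congr_deriv ?_
    field_simp
    ring
  have hb : HasDerivAt (fun x : ℝ => stdNormalCDF (-x)) (-(fφ x)) x := by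
    have := (hasDerivAt_cdf (-x)).comp x (hasDerivAt_neg x)
    have hx : fφ (-x) = fφ x := by unfold fφ; norm_num
    exact this.congr_deriv (by simp [hx])
  have hsub := ha.sub hb
  refine hsub.congr_deriv ?_
  have h8 : Real.sqrt (8 * Real.pi) = 2 * Real.sqrt (2 * Real.pi) := by
    rw [show (8:ℝ) * Real.pi = 2 ^ 2 * (2 * Real.pi) by ring,
      Real.sqrt_mul (by norm_num), Real.sqrt_sq (by norm_num)]
  have h2π : Real.sqrt (2 * Real.pi) ≠ 0 := by positivity
  have he : Real.exp (x ^ 2 / 2) ≠ 0 := Real.exp_ne_zero _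
  have hne : ((1:ℝ) + x ^ 2) ^ 2 ≠ 0 := by positivity
  unfold fφ gfun
  rw [show -x ^ 2 / 2 = -(x ^ 2 / 2) by ring, Real.exp_neg, h8]
  field_simp
  ring

theorem Psi_monotonicity (xΦ : ℝ) (hpos : 0 < xΦ)
    (hroot : xΦ * Real.exp (xΦ ^ 2 / 2) / (1 + xΦ ^ 2) ^ 2 = 1 / Real.sqrt (8 * Real.pi))
    (huniq : ∀ y : ℝ, 0 < y →
      y * Real.exp (y ^ 2 / 2) / (1 + y ^ 2) ^ 2 = 1 / Real.sqrt (8 * Real.pi) → y = xΦ) :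
    MonotoneOn (fun x : ℝ => 1 / (1 + x ^ 2) - stdNormalCDF (-x)) (Set.Ioc 0 xΦ) ∧
    StrictAntiOn (fun x : ℝ => 1 / (1 + x ^ 2) - stdNormalCDF (-x)) (Set.Ioi xΦ) := by
  have hroot' : gfun xΦ = 1 / Real.sqrt (8 * Real.pi) := hroot
  constructor
  · apply monotoneOn_of_deriv_nonneg (convex_Ioc 0 xΦ)
    · exact fun y _ => (hasDerivAt_Psi y).continuousAt.continuousWithinAt
    · exact fun y _ => (hasDerivAt_Psi y).differentiableAt.differentiableWithinAt
    · intro y hy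
      rw [interior_Ioc] at hy
      rw [(hasDerivAt_Psi y).deriv]
      have hgle : gfun y ≤ gfun xΦ :=
        g_mono (Set.mem_Ici.mpr hy.1.le) (Set.mem_Ici.mpr hpos.le) hy.2.le
      have hnn : 0 ≤ 1 / Real.sqrt (8 * Real.pi) - gfun y := by
        rw [← hroot']; linarith
      have : (0:ℝ) < 2 * Real.exp (-y ^ 2 / 2) := by positivity
      nlinarith
  · apply strictAntiOn_of_deriv_neg (convex_Ioi xΦ)
    · exact fun y _ => (hasDerivAt_Psi y).continuousAt.continuousWithinAt
    · intro y hy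
      rw [interior_Ioi] at hy
      rw [(hasDerivAt_Psi y).deriv]
      have hypos : 0 < y := hpos.trans hy
      have hgle : gfun xΦ ≤ gfun y :=
        g_mono (Set.mem_Ici.mpr hpos.le) (Set.mem_Ici.mpr hypos.le) hy.le
      have hy' : xΦ < y := hy
      have hne : gfun y ≠ gfun xΦ := by
        intro h
        have := huniq y hypos (h.trans hroot')
        linarith
      have hlt : gfun xΦ < gfun y := lt_of_le_of_ne hgle (Ne.symm hne)
      have hneg : 1 / Real.sqrt (8 * Real.pi) - gfun y < 0 := by
        rw [← hroot']; linarith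
      exact mul_neg_of_pos_of_neg (by positivity) hneg
end
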